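/- Let p be a prime, r an odd positive integer, and n ≥ 1. Then (p − 1) · v_p(A^r_n) ≥ n − 1 − r · d_p(n), as an inequality of integers, where v_p denotes the p-adic valuation (note A^r_n ≥ 1). -/

import Mathlib

/-- The descent set of a permutation `π` of `{1,…,n}` (realized as `Equiv.Perm (Fin n)`),
as a subset of `[n-1] = {1,…,n-1}`: those positions `i` with `π_i > π_{i+1}`. -/
def descSet (n : ℕ) (π : Equiv.Perm (Fin n)) : Finset ℕ :=
  (Finset.Icc 1 (n - 1)).filter fun i =>
    ∀ (h1 : i - 1 < n) (h2 : i < n), π ⟨i, h2⟩ < π ⟨i - 1, h1⟩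

/-- The descent set statistic `β_n(S)`: the number of permutations of `{1,…,n}`
with descent set exactly `S`. -/
def descStat (n : ℕ) (S : Finset ℕ) : ℕ :=
  (Finset.univ.filter fun π : Equiv.Perm (Fin n) => descSet n π = S).card

/-- `A^r_n = Σ_{S ⊆ [n-1]} β_n(S)^r`. -/
def powSumDes (r n : ℕ) : ℕ :=
  ∑ S ∈ (Finset.Icc 1 (n - 1)).powerset, descStat n S ^ r

/-- `u_p(m)`, the sum of the digits of `m` in base `p`. -/
def digitSum (p m : ℕ) : ℕ := (Nat.digits p m).sum

/-- `d_p(m) = u_p(m) - 1`, the depth of `m` in base `p`. -/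
def depth (p m : ℕ) : ℕ := digitSum p m - 1

open Finset

section Helpers
variable {n t : ℕ}


lemma sm_of_lt_succ {m : ℕ} {α : Type*} [Preorder α] {f : Fin m → α}
    (h : ∀ k (hk : k + 1 < m), f ⟨k, Nat.lt_of_succ_lt hk⟩ < f ⟨k+1, hk⟩) : StrictMono f := by
  have key : ∀ d : ℕ, ∀ a b : Fin m, (b : ℕ) = (a : ℕ) + d + 1 → f a < f b := by
    intro d
    induction d with
    | zero =>
      intro a b hab
      have h2 : (a:ℕ) + 1 < m := by omega
      have := h a h2
      have ha : (⟨(a:ℕ), Nat.lt_of_succ_lt h2⟩ : Fin m) = a := by ext; rfl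
      have hb : (⟨(a:ℕ)+1, h2⟩ : Fin m) = b := by ext; simp; omega
      rwa [ha, hb] at this
    | succ d ih =>
      intro a b hab
      have hb1 : (b:ℕ) - 1 < m := by omega
      refine lt_trans (ih a ⟨(b:ℕ)-1, hb1⟩ (by simp; omega)) ?_
      have h2 : ((b:ℕ) - 1) + 1 < m := by omega
      have := h ((b:ℕ)-1) h2
      have ha : (⟨(b:ℕ)-1, Nat.lt_of_succ_lt h2⟩ : Fin m) = ⟨(b:ℕ)-1, hb1⟩ := rfl
      have hb : (⟨(b:ℕ)-1+1, h2⟩ : Fin m) = b := by ext; simp; omega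
      rwa [ha, hb] at this
  intro a b hab
  exact key ((b:ℕ) - (a:ℕ) - 1) a b (by omega)

lemma descSet_subset_iff {n : ℕ} (π : Equiv.Perm (Fin n)) (T : Finset ℕ) :
    descSet n π ⊆ T ↔ ∀ i : ℕ, ∀ hi : i + 1 < n, i + 1 ∉ T →
      π ⟨i, Nat.lt_of_succ_lt hi⟩ < π ⟨i+1, hi⟩ := by
  constructor
  · intro hsub i hi hiT
    by_contra hlt
    have hne : π ⟨i+1, hi⟩ ≠ π ⟨i, Nat.lt_of_succ_lt hi⟩ := by
      intro he; exact absurd (π.injective he) (by simp [Fin.ext_iff])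
    have hgt : π ⟨i+1, hi⟩ < π ⟨i, Nat.lt_of_succ_lt hi⟩ := lt_of_le_of_ne (not_lt.mp hlt) hne
    apply hiT
    apply hsub
    simp only [descSet, mem_filter, mem_Icc]
    refine ⟨⟨by omega, by omega⟩, ?_⟩
    intro h1 h2
    have e1 : (⟨i+1, h2⟩ : Fin n) = ⟨i+1, hi⟩ := rfl
    have e2 : (⟨i+1-1, h1⟩ : Fin n) = ⟨i, Nat.lt_of_succ_lt hi⟩ := by ext; simp
    rw [e1, e2]; exact hgt
  · intro h j hj
    simp only [descSet, mem_filter, mem_Icc] at hj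
    obtain ⟨⟨hj1, hj2⟩, hcond⟩ := hj
    have hjn : j < n := by omega
    have hcond' := hcond (by omega) hjn
    by_contra hjT
    have hs : j - 1 + 1 = j := by omega
    have := h (j-1) (by omega) (by rw [hs]; exact hjT)
    have e1 : (⟨j-1+1, by omega⟩ : Fin n) = ⟨j, hjn⟩ := by ext; simp [hs]
    rw [e1] at this
    exact absurd (this.trans hcond') (lt_irrefl _)

lemma descSet_one {n : ℕ} : descSet n (1 : Equiv.Perm (Fin n)) = ∅ := by
  ext i
  simp only [descSet, mem_filter, mem_Icc, Finset.notMem_empty, iff_false, not_and, not_forall]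
  intro ⟨h1, h2⟩
  refine ⟨by omega, by omega, ?_⟩
  simp only [Equiv.Perm.one_apply, not_lt, Fin.le_def]
  omega

noncomputable def ASet (n : ℕ) (T : Finset ℕ) : Finset (Equiv.Perm (Fin n)) :=
  Finset.univ.filter fun π => descSet n π ⊆ T

noncomputable def Acard (n : ℕ) (T : Finset ℕ) : ℕ := (ASet n T).card

noncomputable def stdz (hle : t ≤ n) (π : Equiv.Perm (Fin n)) (W : Finset (Fin n)) (hW : W.card = t)
    (hmem : ∀ i : Fin t, π (Fin.castLE hle i) ∈ W) : Equiv.Perm (Fin t) :=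
  Equiv.ofBijective (fun i => (W.orderIsoOfFin hW).symm ⟨π (Fin.castLE hle i), hmem i⟩)
    (Finite.injective_iff_bijective.mp (by
      intro a b hab
      have h2 := (W.orderIsoOfFin hW).symm.injective hab
      rw [Subtype.mk_eq_mk] at h2
      exact Fin.castLE_injective hle (π.injective h2)))

lemma stdz_apply (hle : t ≤ n) (π : Equiv.Perm (Fin n)) (W : Finset (Fin n)) (hW : W.card = t)
    (hmem : ∀ i : Fin t, π (Fin.castLE hle i) ∈ W) (i : Fin t) :
    W.orderEmbOfFin hW (stdz hle π W hW hmem i) = π (Fin.castLE hle i) := by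
  rw [← Finset.coe_orderIsoOfFin_apply]
  simp [stdz, Equiv.ofBijective_apply]

noncomputable def unstd (hle : t ≤ n) (W : Finset (Fin n)) (hW : W.card = t)
    (hWc : Wᶜ.card = n - t) (σ : Equiv.Perm (Fin t)) : Equiv.Perm (Fin n) :=
  Equiv.ofBijective (fun i => if h : (i : ℕ) < t then W.orderEmbOfFin hW (σ ⟨i, h⟩)
     else Wᶜ.orderEmbOfFin hWc ⟨(i:ℕ) - t, by omega⟩)
    (Finite.injective_iff_bijective.mp (by
      intro a b hab
      simp only at hab
      by_cases ha : (a : ℕ) < t <;> by_cases hb : (b : ℕ) < t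
      · rw [dif_pos ha, dif_pos hb] at hab
        have := σ.injective ((W.orderEmbOfFin hW).injective hab)
        rw [Fin.mk_eq_mk] at this; exact Fin.ext this
      · rw [dif_pos ha, dif_neg hb] at hab
        have h1 := Finset.orderEmbOfFin_mem W hW (σ ⟨(a:ℕ), ha⟩)
        rw [hab] at h1
        exact absurd h1 (Finset.mem_compl.mp (Finset.orderEmbOfFin_mem Wᶜ hWc _))
      · rw [dif_neg ha, dif_pos hb] at hab
        have h1 := Finset.orderEmbOfFin_mem W hW (σ ⟨(b:ℕ), hb⟩)
        rw [← hab] at h1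
        exact absurd h1 (Finset.mem_compl.mp (Finset.orderEmbOfFin_mem Wᶜ hWc _))
      · rw [dif_neg ha, dif_neg hb] at hab
        have h2 := (Wᶜ.orderEmbOfFin hWc).injective hab
        rw [Fin.mk_eq_mk] at h2
        have := a.isLt; have := b.isLt
        exact Fin.ext (by omega)))

lemma unstd_apply_lt (hle : t ≤ n) (W : Finset (Fin n)) (hW : W.card = t)
    (hWc : Wᶜ.card = n - t) (σ : Equiv.Perm (Fin t)) (i : Fin n) (h : (i:ℕ) < t) :
    unstd hle W hW hWc σ i = W.orderEmbOfFin hW (σ ⟨i, h⟩) := by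
  simp [unstd, Equiv.ofBijective_apply, dif_pos h]

lemma unstd_apply_ge (hle : t ≤ n) (W : Finset (Fin n)) (hW : W.card = t)
    (hWc : Wᶜ.card = n - t) (σ : Equiv.Perm (Fin t)) (i : Fin n) (h : ¬ (i:ℕ) < t) :
    unstd hle W hW hWc σ i = Wᶜ.orderEmbOfFin hWc ⟨(i:ℕ) - t, by omega⟩ := by
  simp only [unstd, Equiv.ofBijective_apply, dif_neg h]

lemma Acard_rec (ht : 1 ≤ t) (htn : t < n) {T : Finset ℕ}
    (hT : ∀ j ∈ T, 1 ≤ j ∧ j < t) :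
    Acard n (insert t T) = n.choose t * Acard t T := by
  classical
  have hle : t ≤ n := htn.le
  set f : Equiv.Perm (Fin n) → Finset (Fin n) :=
    fun π => image (fun i : Fin t => π (Fin.castLE hle i)) univ with hf
  have hinj : ∀ π : Equiv.Perm (Fin n), Function.Injective (fun i : Fin t => π (Fin.castLE hle i)) :=
    fun π => π.injective.comp (Fin.castLE_injective hle)
  have hfmem : ∀ π ∈ ASet n (insert t T), f π ∈ powersetCard t (univ : Finset (Fin n)) := by
    intro π _
    rw [mem_powersetCard_univ, hf, card_image_of_injective _ (hinj π), card_univ,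
      Fintype.card_fin]
  rw [Acard, card_eq_sum_card_fiberwise hfmem]
  have hfix : ∀ W ∈ powersetCard t (univ : Finset (Fin n)),
      ((ASet n (insert t T)).filter fun π => f π = W).card = Acard t T := by
    intro W hWm
    have hW : W.card = t := (mem_powersetCard_univ.mp hWm)
    have hWc : Wᶜ.card = n - t := by
      rw [card_compl, hW, Fintype.card_fin]
    -- membership extraction
    have hmem' : ∀ π : Equiv.Perm (Fin n), f π = W → ∀ i : Fin t, π (Fin.castLE hle i) ∈ W := by
      intro π hfW i
      rw [← hfW, hf]
      exact mem_image_of_mem _ (mem_univ i)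
    -- tail formula
    have tail : ∀ π : Equiv.Perm (Fin n), π ∈ (ASet n (insert t T)).filter (fun π => f π = W) →
        ∀ k (hk : k < n - t), π ⟨t + k, by omega⟩ = Wᶜ.orderEmbOfFin hWc ⟨k, hk⟩ := by
      intro π hπ
      rw [mem_filter, ASet, mem_filter] at hπ
      obtain ⟨⟨-, hdesc⟩, hfW⟩ := hπ
      set g : Fin (n - t) → Fin n := fun k => π ⟨t + (k:ℕ), by omega⟩ with hg
      have hgmono : StrictMono g := by
        apply sm_of_lt_succ
        intro k hk
        have h1 : (t + k) + 1 < n := by omega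
        have := (descSet_subset_iff π (insert t T)).mp hdesc (t + k) h1 (by
          intro hmem
          rcases Finset.mem_insert.mp hmem with h | h
          · omega
          · exact absurd ((hT _ h).2) (by omega))
        exact this
      have hgmem : ∀ k, g k ∈ Wᶜ := by
        intro k
        rw [Finset.mem_compl]
        intro hmem
        rw [← hfW, hf, mem_image] at hmem
        obtain ⟨i, -, hi⟩ := hmem
        have := π.injective hi
        have h2 : (Fin.castLE hle i : ℕ) = t + (k:ℕ) := by rw [this]
        rw [Fin.coe_castLE] at h2
        have := i.isLt
        omega
      have := Finset.orderEmbOfFin_unique hWc hgmem hgmono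
      intro k hk
      have h2 := congrFun this ⟨k, hk⟩
      rw [hg] at h2
      exact h2
    rw [Acard]
    apply Finset.card_bij (fun π hπ => stdz hle π W hW (hmem' π (by
      rw [mem_filter] at hπ; exact hπ.2)))
    · -- maps into ASet t T
      intro π hπ
      have hπ' := hπ
      rw [mem_filter, ASet, mem_filter] at hπ'
      obtain ⟨⟨-, hdesc⟩, hfW⟩ := hπ'
      rw [ASet, mem_filter]
      refine ⟨mem_univ _, ?_⟩
      rw [descSet_subset_iff]
      intro i hi hiT
      set σ := stdz hle π W hW (hmem' π hfW)
      rw [← (W.orderEmbOfFin hW).lt_iff_lt, stdz_apply, stdz_apply]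
      have h1 : i + 1 < n := by omega
      have := (descSet_subset_iff π (insert t T)).mp hdesc i h1 (by
        intro hmem
        rcases Finset.mem_insert.mp hmem with h | h
        · omega
        · exact hiT h)
      convert this using 2
      · rfl
      · simp [Fin.castLE]
      · simp [Fin.castLE]
    · -- injectivity
      intro π₁ hπ₁ π₂ hπ₂ heq
      have hfW₁ : f π₁ = W := (mem_filter.mp hπ₁).2
      have hfW₂ : f π₂ = W := (mem_filter.mp hπ₂).2
      apply Equiv.ext
      intro i
      by_cases h : (i : ℕ) < t
      · have e : i = Fin.castLE hle ⟨(i:ℕ), h⟩ := by ext; simp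
        rw [e, ← stdz_apply hle π₁ W hW (hmem' π₁ hfW₁),
          ← stdz_apply hle π₂ W hW (hmem' π₂ hfW₂), heq]
      · have hi := i.isLt
        have e : i = (⟨t + ((i:ℕ) - t), by omega⟩ : Fin n) := by ext; simp; omega
        rw [e, tail π₁ hπ₁ ((i:ℕ) - t) (by omega), tail π₂ hπ₂ ((i:ℕ) - t) (by omega)]
    · -- surjectivity
      intro σ hσ
      rw [ASet, mem_filter] at hσ
      obtain ⟨-, hσdesc⟩ := hσ
      set π := unstd hle W hW hWc σ with hπdef
      have hfW : f π = W := by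
        rw [hf]
        apply Finset.eq_of_subset_of_card_le
        · intro x hx
          rw [mem_image] at hx
          obtain ⟨i, -, hi⟩ := hx
          rw [← hi, unstd_apply_lt hle W hW hWc σ _ (by simp [Fin.coe_castLE, i.isLt])]
          exact Finset.orderEmbOfFin_mem W hW _
        · rw [card_image_of_injective _ (hinj π), card_univ, Fintype.card_fin, hW]
      have hπdesc : descSet n π ⊆ insert t T := by
        rw [descSet_subset_iff]
        intro i hi hiT
        have hne : i + 1 ≠ t := fun h => hiT (h ▸ mem_insert_self t T)
        have hnT : i + 1 ∉ T := fun h => hiT (mem_insert_of_mem h)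
        by_cases hc : i + 1 < t
        · rw [unstd_apply_lt hle W hW hWc σ _ (by simp; omega),
            unstd_apply_lt hle W hW hWc σ _ (by simp; omega)]
          apply (W.orderEmbOfFin hW).strictMono
          have := (descSet_subset_iff σ T).mp hσdesc i (by omega) hnT
          convert this using 2 <;> simp
        · have hge : t ≤ i := by omega
          rw [unstd_apply_ge hle W hW hWc σ _ (by simp; omega),
            unstd_apply_ge hle W hW hWc σ _ (by simp; omega)]
          apply (Wᶜ.orderEmbOfFin hWc).strictMono
          rw [Fin.mk_lt_mk]
          simp
          omega
      refine ⟨π, ?_, ?_⟩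
      · rw [mem_filter, ASet, mem_filter]
        exact ⟨⟨mem_univ _, hπdesc⟩, hfW⟩
      · apply Equiv.ext
        intro i
        have : W.orderEmbOfFin hW (stdz hle π W hW (hmem' π hfW) i) = W.orderEmbOfFin hW (σ i) := by
          rw [stdz_apply]
          exact unstd_apply_lt hle W hW hWc σ _ (by simp [Fin.coe_castLE, i.isLt])
        exact (W.orderEmbOfFin hW).injective this
  rw [Finset.sum_congr rfl hfix, Finset.sum_const, card_powersetCard, card_univ,
    Fintype.card_fin, smul_eq_mul]


lemma ASet_empty {n : ℕ} : ASet n ∅ = {1} := by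
  ext π
  simp only [ASet, mem_filter, mem_univ, true_and, mem_singleton]
  constructor
  · intro h
    have hmono : StrictMono π :=
      sm_of_lt_succ (fun k hk => (descSet_subset_iff π ∅).mp h k hk (notMem_empty _))
    have hge' : ∀ k (hk : k < n), k ≤ ((π ⟨k, hk⟩ : Fin n) : ℕ) := by
      intro k
      induction k with
      | zero => intro hk; exact Nat.zero_le _
      | succ k ih =>
        intro hk
        have h1 : k < n := by omega
        have hlt := hmono (show (⟨k, h1⟩ : Fin n) < ⟨k+1, hk⟩ by simp [Fin.lt_def])
        have h2 := ih h1
        have h3 : ((π ⟨k, h1⟩ : Fin n) : ℕ) < ((π ⟨k+1, hk⟩ : Fin n) : ℕ) := hlt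
        omega
    have hge : ∀ i : Fin n, (i : ℕ) ≤ ((π i : Fin n) : ℕ) := fun i => hge' i i.isLt
    have hsum : ∑ i : Fin n, ((π i : Fin n) : ℕ) = ∑ i : Fin n, (i : ℕ) :=
      Equiv.sum_comp π (fun i => (i : ℕ))
    have heq := (Finset.sum_eq_sum_iff_of_le (fun i _ => hge i)).mp hsum.symm
    apply Equiv.ext
    intro i
    exact (Fin.ext (heq i (mem_univ i)).symm : π i = i)
  · rintro rfl
    rw [descSet_one]

lemma Acard_empty {n : ℕ} : Acard n ∅ = 1 := by rw [Acard, ASet_empty, card_singleton]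

lemma Acard_pos {n : ℕ} (T : Finset ℕ) : 0 < Acard n T := by
  rw [Acard]
  apply card_pos.mpr
  exact ⟨1, by simp [ASet, mem_filter, descSet_one]⟩

lemma digitSum_pos {p m : ℕ} (hp : 2 ≤ p) (hm : 1 ≤ m) : 1 ≤ digitSum p m := by
  rw [digitSum]
  have hm0 : m ≠ 0 := by omega
  have hne : Nat.digits p m ≠ [] := Nat.digits_ne_nil_iff_ne_zero.mpr hm0
  have hlast := Nat.getLast_digit_ne_zero p hm0
  have hmem : (Nat.digits p m).getLast (Nat.digits_ne_nil_iff_ne_zero.mpr hm0) ∈ Nat.digits p m :=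
    List.getLast_mem _
  have hle := List.single_le_sum (fun x (_ : x ∈ Nat.digits p m) => Nat.zero_le x) _ hmem
  omega

lemma sub_one_mul_val_choose {p : ℕ} [hpf : Fact p.Prime] {t n : ℕ} (h : t ≤ n) :
    ((p : ℤ) - 1) * padicValNat p (n.choose t) =
      digitSum p t + digitSum p (n - t) - digitSum p n := by
  have hp2 : 2 ≤ p := hpf.out.two_le
  have e1 : n.choose t * (Nat.factorial t * Nat.factorial (n-t)) = Nat.factorial n := by
    rw [← mul_assoc, Nat.choose_mul_factorial_mul_factorial h]
  have key : padicValNat p (Nat.factorial n) = padicValNat p (n.choose t) +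
      (padicValNat p (Nat.factorial t) + padicValNat p (Nat.factorial (n-t))) := by
    rw [← e1, padicValNat.mul (Nat.choose_pos h).ne' (by positivity),
      padicValNat.mul (Nat.factorial_ne_zero t) (Nat.factorial_ne_zero (n-t))]
  have leg : ∀ m : ℕ, ((p:ℤ) - 1) * (padicValNat p (Nat.factorial m) : ℤ)
      = (m : ℤ) - digitSum p m := by
    intro m
    have h1 : (p - 1) * padicValNat p (Nat.factorial m) = m - digitSum p m :=
      sub_one_mul_padicValNat_factorial m
    have h2 : digitSum p m ≤ m := Nat.digit_sum_le p m
    have h3 := congrArg (fun x : ℕ => (x : ℤ)) h1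
    simp only [Nat.cast_mul] at h3
    rw [Nat.cast_sub h2, Nat.cast_sub (by omega : 1 ≤ p)] at h3
    simpa using h3
  have e : (padicValNat p (Nat.factorial n) : ℤ) = padicValNat p (n.choose t) +
      (padicValNat p (Nat.factorial t) + padicValNat p (Nat.factorial (n-t))) := by
    exact_mod_cast key
  have e2 : ((p:ℤ)-1) * (padicValNat p (Nat.factorial n) : ℤ)
      = ((p:ℤ)-1) * (padicValNat p (n.choose t) : ℤ)
        + (((p:ℤ)-1) * (padicValNat p (Nat.factorial t) : ℤ)
          + ((p:ℤ)-1) * (padicValNat p (Nat.factorial (n-t)) : ℤ)) := by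
    rw [← mul_add, ← mul_add, e]
  rw [leg n, leg t, leg (n-t)] at e2
  have hcast : ((n - t : ℕ) : ℤ) = (n : ℤ) - t := Nat.cast_sub h
  rw [hcast] at e2
  linarith

lemma val_Acard_aux {p : ℕ} [hpf : Fact p.Prime] (k : ℕ) :
    ∀ n : ℕ, 1 ≤ n → ∀ T : Finset ℕ, (∀ j ∈ T, 1 ≤ j ∧ j < n) → T.card = k →
    (k : ℤ) + 1 ≤ ((p:ℤ) - 1) * padicValNat p (Acard n T) + digitSum p n := by
  have hp2 : 2 ≤ p := hpf.out.two_le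
  induction k with
  | zero =>
    intro n hn T hT hc
    rw [card_eq_zero] at hc
    subst hc
    rw [Acard_empty, padicValNat.one]
    have h2 : (1:ℤ) ≤ digitSum p n := by exact_mod_cast digitSum_pos hp2 hn
    push_cast
    linarith
  | succ k ih =>
    intro n hn T hT hc
    have hne : T.Nonempty := card_pos.mp (by omega)
    set t := T.max' hne with htdef
    have htT : t ∈ T := T.max'_mem hne
    obtain ⟨ht1, htn⟩ := hT t htT
    set T' := T.erase t with hT'def
    have hT' : ∀ j ∈ T', 1 ≤ j ∧ j < t := by
      intro j hj
      have hjT : j ∈ T := mem_of_mem_erase hj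
      have hjne : j ≠ t := ne_of_mem_erase hj
      have hjle : j ≤ t := T.le_max' j hjT
      exact ⟨(hT j hjT).1, lt_of_le_of_ne hjle hjne⟩
    have hins : insert t T' = T := insert_erase htT
    have hrec : Acard n T = n.choose t * Acard t T' := by
      rw [← hins]; exact Acard_rec ht1 htn hT'
    have hcard' : T'.card = k := by
      rw [hT'def, card_erase_of_mem htT, hc]
      omega
    have hih := ih t ht1 T' hT' hcard'
    have hmul : padicValNat p (Acard n T) =
        padicValNat p (n.choose t) + padicValNat p (Acard t T') := by
      rw [hrec, padicValNat.mul (Nat.choose_pos htn.le).ne' (Acard_pos T').ne']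
    have hch := sub_one_mul_val_choose (p := p) htn.le
    have hnt1 : 1 ≤ digitSum p (n - t) := digitSum_pos hp2 (by omega)
    have hmulz : (padicValNat p (Acard n T) : ℤ)
        = (padicValNat p (n.choose t) : ℤ) + (padicValNat p (Acard t T') : ℤ) := by
      exact_mod_cast hmul
    have e3 : ((p:ℤ)-1) * (padicValNat p (Acard n T) : ℤ)
        = ((p:ℤ)-1) * (padicValNat p (n.choose t) : ℤ)
          + ((p:ℤ)-1) * (padicValNat p (Acard t T') : ℤ) := by
      rw [hmulz]; ring
    have h6 : (1 : ℤ) ≤ digitSum p (n - t) := by exact_mod_cast hnt1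
    rw [Nat.cast_add, Nat.cast_one]
    linarith [e3, hch, hih, h6]

lemma Acard_eq_sum {n : ℕ} (S : Finset ℕ) :
    Acard n S = ∑ T ∈ S.powerset, descStat n T := by
  classical
  rw [Acard, ASet]
  rw [card_eq_sum_card_fiberwise (f := descSet n) (t := S.powerset)
    (fun π hπ => mem_powerset.mpr (mem_filter.mp hπ).2)]
  apply Finset.sum_congr rfl
  intro T hT
  rw [descStat, filter_filter]
  congr 1
  apply filter_congr
  intro π _
  constructor
  · rintro ⟨-, h⟩; exact h
  · rintro rfl; exact ⟨mem_powerset.mp hT, rfl⟩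

lemma sum_superset_sign (U V : Finset ℕ) (hUV : U ⊆ V) :
    ∑ S ∈ V.powerset.filter (fun S => U ⊆ S), (-1:ℤ)^S.card
      = if U = V then (-1:ℤ)^V.card else 0 := by
  classical
  have key : ∑ S ∈ V.powerset.filter (fun S => U ⊆ S), (-1:ℤ)^S.card
      = ∑ R ∈ (V \ U).powerset, (-1:ℤ)^(R.card + U.card) := by
    apply Finset.sum_nbij' (fun S => S \ U) (fun R => R ∪ U)
    · intro S hS
      rw [mem_filter, mem_powerset] at hS
      exact mem_powerset.mpr (sdiff_subset_sdiff hS.1 Subset.rfl)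
    · intro R hR
      rw [mem_powerset] at hR
      rw [mem_filter, mem_powerset]
      exact ⟨union_subset (hR.trans sdiff_subset) hUV, subset_union_right⟩
    · intro S hS
      rw [mem_filter] at hS
      exact sdiff_union_of_subset hS.2
    · intro R hR
      rw [mem_powerset] at hR
      have hd : Disjoint R U := (subset_sdiff.mp hR).2
      rw [union_sdiff_cancel_right hd]
    · intro S hS
      rw [mem_filter] at hS
      congr 1
      rw [card_sdiff_of_subset hS.2]
      have := card_le_card hS.2
      omega
  rw [key]
  have : ∀ R ∈ (V \ U).powerset, (-1:ℤ)^(R.card + U.card) = (-1:ℤ)^R.card * (-1:ℤ)^U.card :=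
    fun R _ => pow_add _ _ _
  rw [Finset.sum_congr rfl this, ← Finset.sum_mul, Finset.sum_powerset_neg_one_pow_card]
  by_cases h : U = V
  · subst h
    rw [if_pos (by simp), if_pos rfl, one_mul]
  · rw [if_neg h, if_neg (by
      intro he
      exact h (le_antisymm hUV (sdiff_eq_empty_iff_subset.mp he))), zero_mul]

lemma descStat_eq {n : ℕ} (S : Finset ℕ) :
    (descStat n S : ℤ) = (-1:ℤ)^S.card * ∑ T ∈ S.powerset, (-1:ℤ)^T.card * Acard n T := by
  classical
  have h1 : ∀ T ∈ S.powerset, (-1:ℤ)^T.card * (Acard n T : ℤ)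
      = ∑ R ∈ S.powerset, (if R ⊆ T then (-1:ℤ)^T.card * descStat n R else 0) := by
    intro T hT
    rw [Finset.sum_ite, Finset.sum_const_zero, add_zero]
    have he : S.powerset.filter (fun R => R ⊆ T) = T.powerset := by
      ext R
      rw [mem_filter, mem_powerset, mem_powerset]
      exact ⟨fun h => h.2, fun h => ⟨h.trans (mem_powerset.mp hT), h⟩⟩
    rw [he, Acard_eq_sum, ← Finset.mul_sum]
    push_cast
    ring
  have h2 : ∀ R ∈ S.powerset,
      ((-1:ℤ)^S.card * ∑ T ∈ S.powerset, (if R ⊆ T then (-1:ℤ)^T.card * descStat n R else 0))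
        = if R = S then (descStat n R : ℤ) else 0 := by
    intro R hR
    have hsplit : ∀ T ∈ S.powerset, (if R ⊆ T then (-1:ℤ)^T.card * descStat n R else 0)
        = (if R ⊆ T then (-1:ℤ)^T.card else 0) * descStat n R := by
      intro T _
      split <;> simp
    rw [Finset.sum_congr rfl hsplit, ← Finset.sum_mul, ← Finset.sum_filter,
      sum_superset_sign R S (mem_powerset.mp hR)]
    by_cases h : R = S
    · rw [if_pos h, if_pos h, ← mul_assoc, ← pow_add, Even.neg_one_pow ⟨S.card, rfl⟩, one_mul]
    · rw [if_neg h, if_neg h, zero_mul, mul_zero]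
  symm
  calc (-1:ℤ)^S.card * ∑ T ∈ S.powerset, (-1:ℤ)^T.card * (Acard n T : ℤ)
      = ∑ T ∈ S.powerset, ∑ R ∈ S.powerset,
          ((-1:ℤ)^S.card * if R ⊆ T then (-1:ℤ)^T.card * descStat n R else 0) := by
        rw [Finset.mul_sum]
        apply Finset.sum_congr rfl
        intro T hT
        rw [h1 T hT, Finset.mul_sum]
    _ = ∑ R ∈ S.powerset, ((-1:ℤ)^S.card *
          ∑ T ∈ S.powerset, (if R ⊆ T then (-1:ℤ)^T.card * descStat n R else 0)) := by
        rw [Finset.sum_comm]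
        apply Finset.sum_congr rfl
        intro R _
        rw [Finset.mul_sum]
    _ = ∑ R ∈ S.powerset, (if R = S then (descStat n R : ℤ) else 0) :=
        Finset.sum_congr rfl h2
    _ = (descStat n S : ℤ) := by
        rw [Finset.sum_ite_eq' S.powerset S (fun R => (descStat n R : ℤ)),
          if_pos (mem_powerset_self S)]

lemma powSum_eq {r n : ℕ} (hro : Odd r) :
    (powSumDes r n : ℤ)
      = ∑ g ∈ Fintype.piFinset (fun _ : Fin r => (Finset.Icc 1 (n-1)).powerset),
          (if Finset.univ.sup g = Finset.Icc 1 (n-1)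
            then (-1:ℤ)^(Finset.Icc 1 (n-1)).card else 0)
          * ∏ i : Fin r, ((-1:ℤ)^(g i).card * Acard n (g i)) := by
  classical
  set E := Finset.Icc 1 (n-1) with hE
  have step1 : (powSumDes r n : ℤ) = ∑ S ∈ E.powerset, ((descStat n S : ℤ))^r := by
    rw [powSumDes]
    push_cast
    rfl
  -- rewrite β^r using expansion
  have step2 : ∀ S ∈ E.powerset, ((descStat n S : ℤ))^r
      = (-1:ℤ)^S.card * ∑ g ∈ Fintype.piFinset (fun _ : Fin r => E.powerset),
          ∏ i : Fin r, (if g i ⊆ S then (-1:ℤ)^(g i).card * Acard n (g i) else 0) := by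
    intro S hS
    rw [descStat_eq, mul_pow]
    have hsign : ((-1:ℤ)^S.card)^r = (-1:ℤ)^S.card := by
      rw [← pow_mul, mul_comm, pow_mul, hro.neg_one_pow]
    rw [hsign]
    congr 1
    -- (Σ_{T ⊆ S} c T)^r = Σ_g ∏ (if ...)
    have hext : ∑ T ∈ S.powerset, (-1:ℤ)^T.card * Acard n T
        = ∑ T ∈ E.powerset, (if T ⊆ S then (-1:ℤ)^T.card * Acard n T else 0) := by
      rw [Finset.sum_ite, Finset.sum_const_zero, add_zero]
      congr 1
      ext T
      rw [mem_powerset, mem_filter, mem_powerset]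
      exact ⟨fun h => ⟨h.trans (mem_powerset.mp hS), h⟩, fun h => h.2⟩
    rw [hext, Finset.sum_pow']
  rw [step1, Finset.sum_congr rfl step2]
  -- push sign inside and swap sums
  have step3 : ∀ S ∈ E.powerset, ((-1:ℤ)^S.card *
        ∑ g ∈ Fintype.piFinset (fun _ : Fin r => E.powerset),
          ∏ i : Fin r, (if g i ⊆ S then (-1:ℤ)^(g i).card * Acard n (g i) else 0))
      = ∑ g ∈ Fintype.piFinset (fun _ : Fin r => E.powerset),
          ((-1:ℤ)^S.card * ∏ i : Fin r, (if g i ⊆ S then (-1:ℤ)^(g i).card * Acard n (g i) else 0)) := by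
    intro S _
    rw [Finset.mul_sum]
  rw [Finset.sum_congr rfl step3, Finset.sum_comm]
  apply Finset.sum_congr rfl
  intro g hg
  have hgE : ∀ i : Fin r, g i ⊆ E := by
    intro i
    have := Fintype.mem_piFinset.mp hg i
    exact mem_powerset.mp this
  have hsupE : Finset.univ.sup g ⊆ E := by
    rw [← Finset.le_iff_subset]
    exact Finset.sup_le fun i _ => Finset.le_iff_subset.mpr (hgE i)
  have hprod : ∀ S ∈ E.powerset,
      (∏ i : Fin r, (if g i ⊆ S then (-1:ℤ)^(g i).card * Acard n (g i) else 0))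
        = if Finset.univ.sup g ⊆ S then ∏ i : Fin r, ((-1:ℤ)^(g i).card * Acard n (g i)) else 0 := by
    intro S _
    by_cases hall : Finset.univ.sup g ⊆ S
    · rw [if_pos hall]
      apply Finset.prod_congr rfl
      intro i _
      rw [if_pos (Finset.le_iff_subset.mp ((Finset.le_sup (mem_univ i)).trans
        (Finset.le_iff_subset.mpr hall)))]
    · rw [if_neg hall]
      have hall' : ¬ ∀ i ∈ (Finset.univ : Finset (Fin r)), g i ≤ S := by
        rw [← Finset.sup_le_iff]
        exact fun h => hall (Finset.le_iff_subset.mp h)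
      push_neg at hall'
      obtain ⟨i, -, hi'⟩ := hall'
      have hi : ¬ g i ⊆ S := fun h => hi' (Finset.le_iff_subset.mpr h)
      exact Finset.prod_eq_zero (mem_univ i) (if_neg hi)
  calc ∑ S ∈ E.powerset, ((-1:ℤ)^S.card *
          ∏ i : Fin r, (if g i ⊆ S then (-1:ℤ)^(g i).card * Acard n (g i) else 0))
      = ∑ S ∈ E.powerset, (((-1:ℤ)^S.card) *
          if Finset.univ.sup g ⊆ S then ∏ i : Fin r, ((-1:ℤ)^(g i).card * Acard n (g i)) else 0) := by
        apply Finset.sum_congr rfl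
        intro S hS
        rw [hprod S hS]
    _ = (∑ S ∈ E.powerset.filter (fun S => Finset.univ.sup g ⊆ S), (-1:ℤ)^S.card)
          * ∏ i : Fin r, ((-1:ℤ)^(g i).card * Acard n (g i)) := by
        rw [Finset.sum_filter, Finset.sum_mul]
        apply Finset.sum_congr rfl
        intro S _
        split <;> simp [mul_comm]
    _ = (if Finset.univ.sup g = E then (-1:ℤ)^E.card else 0)
          * ∏ i : Fin r, ((-1:ℤ)^(g i).card * Acard n (g i)) := by
        rw [sum_superset_sign _ _ hsupE]

lemma padicValNat_prod {p : ℕ} [hpf : Fact p.Prime] {ι : Type*} (s : Finset ι) (f : ι → ℕ)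
    (hf : ∀ i ∈ s, f i ≠ 0) :
    padicValNat p (∏ i ∈ s, f i) = ∑ i ∈ s, padicValNat p (f i) := by
  classical
  induction s using Finset.cons_induction with
  | empty => simp [padicValNat.one]
  | cons a s ha ih =>
    rw [Finset.prod_cons, Finset.sum_cons,
      padicValNat.mul (hf a (mem_cons_self a s)) (Finset.prod_ne_zero_iff.mpr
        (fun i hi => hf i (mem_cons_of_mem hi))),
      ih (fun i hi => hf i (mem_cons_of_mem hi))]

lemma descStat_empty_pos {n : ℕ} : 0 < descStat n ∅ := by
  rw [descStat]
  apply card_pos.mpr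
  exact ⟨1, by simp [descSet_one]⟩

lemma powSumDes_pos {r n : ℕ} : 0 < powSumDes r n := by
  rw [powSumDes]
  calc 0 < descStat n ∅ ^ r := pow_pos descStat_empty_pos r
    _ ≤ _ := Finset.single_le_sum (f := fun S => descStat n S ^ r)
      (fun S _ => Nat.zero_le _) (empty_mem_powerset _)

end Helpers

theorem stmt10 (p r n : ℕ) (hp : p.Prime) (hr : 0 < r) (hro : Odd r) (hn : 1 ≤ n) :
    (n : ℤ) - 1 - r * depth p n ≤ (p - 1) * padicValNat p (powSumDes r n) := by
  classical
  haveI hpf : Fact p.Prime := ⟨hp⟩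
  have hp2 : 2 ≤ p := hp.two_le
  have hu1 : 1 ≤ digitSum p n := digitSum_pos hp2 hn
  have hdep : (depth p n : ℤ) = (digitSum p n : ℤ) - 1 := by
    rw [depth, Nat.cast_sub hu1, Nat.cast_one]
  set m : ℤ := (n : ℤ) - 1 - r * depth p n with hm
  have hval0 : (0:ℤ) ≤ ((p:ℤ) - 1) * padicValNat p (powSumDes r n) := by
    apply mul_nonneg <;> [skip; positivity]
    have : (2:ℤ) ≤ p := by exact_mod_cast hp2
    linarith
  rcases le_or_gt m 0 with hm0 | hm0
  · calc m ≤ 0 := hm0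
      _ ≤ _ := hval0
  -- main case
  set mn : ℕ := m.toNat with hmn
  have hmn' : (mn : ℤ) = m := Int.toNat_of_nonneg hm0.le
  set k : ℕ := (mn + p - 2) / (p - 1) with hk
  have hdm := Nat.div_add_mod (mn + p - 2) (p - 1)
  have hmod : (mn + p - 2) % (p - 1) < p - 1 := Nat.mod_lt _ (by omega)
  -- divisibility of each term
  have hdvd : ((p:ℤ))^k ∣ (powSumDes r n : ℤ) := by
    rw [powSum_eq hro]
    apply Finset.dvd_sum
    intro g hg
    by_cases hc : Finset.univ.sup g = Finset.Icc 1 (n-1)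
    · rw [if_pos hc]
      -- p^k divides the product of the Acards
      have hgE : ∀ i : Fin r, g i ⊆ Finset.Icc 1 (n-1) :=
        fun i => mem_powerset.mp (Fintype.mem_piFinset.mp hg i)
      have hvali : ∀ i : Fin r, ((g i).card : ℤ) + 1 ≤
          ((p:ℤ) - 1) * padicValNat p (Acard n (g i)) + digitSum p n := by
        intro i
        apply val_Acard_aux (g i).card n hn (g i) ?_ rfl
        intro j hj
        have := mem_Icc.mp (hgE i hj)
        omega
      -- sum of cards at least n - 1
      have hcards : (n - 1 : ℕ) ≤ ∑ i : Fin r, (g i).card := by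
        calc (n-1:ℕ) = (Finset.Icc 1 (n-1)).card := by
              rw [Nat.card_Icc]; omega
          _ = (Finset.univ.sup g).card := by rw [hc]
          _ = ((Finset.univ : Finset (Fin r)).biUnion g).card := by
              rw [Finset.sup_eq_biUnion]
          _ ≤ ∑ i : Fin r, (g i).card := Finset.card_biUnion_le
      -- total valuation
      set V : ℕ := ∑ i : Fin r, padicValNat p (Acard n (g i)) with hV
      have hVZ : (V : ℤ) = ∑ i : Fin r, (padicValNat p (Acard n (g i)) : ℤ) := by
        rw [hV]; push_cast; rfl
      have hsum : ((n:ℤ) - 1) + r ≤ ((p:ℤ) - 1) * V + r * digitSum p n := by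
        have hA := Finset.sum_le_sum (fun i (_ : i ∈ (Finset.univ : Finset (Fin r))) => hvali i)
        have hL : ∑ i : Fin r, (((g i).card : ℤ) + 1)
            = (∑ i : Fin r, ((g i).card : ℤ)) + r := by
          rw [Finset.sum_add_distrib, Finset.sum_const, card_univ, Fintype.card_fin]
          simp
        have hR : ∑ i : Fin r, (((p:ℤ)-1) * (padicValNat p (Acard n (g i)) : ℤ)
              + (digitSum p n : ℤ))
            = ((p:ℤ)-1) * (V : ℤ) + r * digitSum p n := by
          rw [Finset.sum_add_distrib, ← Finset.mul_sum, Finset.sum_const, card_univ,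
            Fintype.card_fin, nsmul_eq_mul, hVZ]
        rw [hL, hR] at hA
        have hcz : ((n:ℤ) - 1) ≤ ∑ i : Fin r, ((g i).card : ℤ) := by
          have h5 : ((n - 1 : ℕ) : ℤ) ≤ ((∑ i : Fin r, (g i).card : ℕ) : ℤ) := by
            exact_mod_cast hcards
          rw [Nat.cast_sub hn] at h5
          push_cast at h5
          push_cast
          linarith
        linarith
      have hmle : (mn : ℤ) ≤ ((p:ℤ) - 1) * V := by
        rw [hmn', hm, hdep]
        push_cast at hsum ⊢
        linarith
      have hVk : k ≤ V := by
        have fact1 : (k : ℤ) * ((p:ℤ) - 1) ≤ (mn : ℤ) + p - 2 := by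
          have h1 : ((mn + p - 2) / (p - 1)) * (p - 1) ≤ mn + p - 2 :=
            Nat.div_mul_le_self _ _
          have h2 : (((mn + p - 2) / (p - 1) * (p - 1) : ℕ) : ℤ)
              ≤ (((mn + p - 2) : ℕ) : ℤ) := by exact_mod_cast h1
          rw [hk]
          push_cast [Nat.cast_sub (by omega : 1 ≤ p), Nat.cast_sub (by omega : 2 ≤ mn + p)] at h2 ⊢
          linarith
        by_contra hVk'
        push_neg at hVk'
        have hVle : (V : ℤ) ≤ (k : ℤ) - 1 := by
          have : (V : ℤ) + 1 ≤ k := by exact_mod_cast hVk'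
          linarith
        have hmono : ((p:ℤ) - 1) * (V:ℤ) ≤ ((p:ℤ) - 1) * ((k:ℤ) - 1) := by
          apply mul_le_mul_of_nonneg_left hVle
          have : (2:ℤ) ≤ p := by exact_mod_cast hp2
          linarith
        have hp2z : (2:ℤ) ≤ p := by exact_mod_cast hp2
        have hmn1 : (1:ℤ) ≤ mn := by
          rw [hmn']
          omega
        nlinarith [hmle, hmono, fact1]
      have hdvdnat : p ^ k ∣ ∏ i : Fin r, Acard n (g i) := by
        have : p ^ V ∣ ∏ i : Fin r, Acard n (g i) := by
          rw [hV, ← padicValNat_prod Finset.univ (fun i => Acard n (g i))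
            (fun i _ => (Acard_pos (g i)).ne')]
          exact pow_padicValNat_dvd
        exact (pow_dvd_pow p hVk).trans this
      have hdvdint : ((p:ℤ))^k ∣ ∏ i : Fin r, (Acard n (g i) : ℤ) := by
        have := Int.natCast_dvd_natCast.mpr hdvdnat
        push_cast at this
        exact this
      rw [Finset.prod_mul_distrib]
      exact Dvd.dvd.mul_left (Dvd.dvd.mul_left hdvdint _) _
    · rw [if_neg hc, zero_mul]
      exact dvd_zero _
  have hne : powSumDes r n ≠ 0 := powSumDes_pos.ne'
  have hdvdnat : p ^ k ∣ powSumDes r n := by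
    have : ((p ^ k : ℕ) : ℤ) ∣ (powSumDes r n : ℤ) := by push_cast; exact hdvd
    exact_mod_cast this
  have hkle : k ≤ padicValNat p (powSumDes r n) := (padicValNat_dvd_iff_le hne).mp hdvdnat
  -- conclude
  have hfin : m ≤ ((p:ℤ) - 1) * k := by
    have h1 : mn + p - 2 < ((mn + p - 2) / (p - 1) + 1) * (p - 1) := by
      have e := Nat.div_add_mod (mn + p - 2) (p - 1)
      have hm2 : (mn + p - 2) % (p - 1) < p - 1 := Nat.mod_lt _ (by omega)
      calc mn + p - 2 = (p - 1) * ((mn + p - 2) / (p - 1)) + (mn + p - 2) % (p - 1) := e.symm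
        _ < (p - 1) * ((mn + p - 2) / (p - 1)) + (p - 1) := Nat.add_lt_add_left hm2 _
        _ = ((mn + p - 2) / (p - 1) + 1) * (p - 1) := by ring
    have h2 : (((mn + p - 2) : ℕ) : ℤ) < ((((mn + p - 2) / (p - 1) + 1) * (p - 1) : ℕ) : ℤ) := by
      exact_mod_cast h1
    rw [← hk] at h2
    push_cast [Nat.cast_sub (by omega : 1 ≤ p), Nat.cast_sub (by omega : 2 ≤ mn + p)] at h2
    rw [← hmn']
    linarith
  calc m ≤ ((p:ℤ) - 1) * k := hfin
    _ ≤ ((p:ℤ) - 1) * padicValNat p (powSumDes r n) := by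
        apply mul_le_mul_of_nonneg_left
        · exact_mod_cast hkle
        · have : (2:ℤ) ≤ p := by exact_mod_cast hp2
          linarith
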